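/- For all integers m, n ≥ 1 and every sign pattern ε = (ε_1, …, ε_{min{m,n}}) ∈ {±1}^{min{m,n}}, there exists an m×n real matrix that is SSR(ε). -/

import Mathlib

open Finset

/-- Sum of `k` distinct naturals is at least `0+1+...+(k-1)`. -/
lemma aux_sum_card (k : ℕ) : ∀ S : Finset ℕ, S.card = k → ∑ i ∈ range k, i ≤ ∑ a ∈ S, a := by
  induction k with
  | zero => intro S h; simp
  | succ k ih =>
    intro S hS
    have hne : S.Nonempty := Finset.card_pos.mp (by omega)
    set a := S.max' hne with ha
    have haS : a ∈ S := S.max'_mem hne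
    have hsub : S ⊆ range (a+1) := by
      intro b hb
      simp only [mem_range]
      exact Nat.lt_succ_of_le (S.le_max' b hb)
    have hcard : k + 1 ≤ a + 1 := by
      have := Finset.card_le_card hsub
      simpa [hS] using this
    have hk : k ≤ a := by omega
    have herase : (S.erase a).card = k := by rw [Finset.card_erase_of_mem haS, hS]; omega
    have h1 := ih (S.erase a) herase
    have h2 : ∑ b ∈ S.erase a, b + a = ∑ b ∈ S, b := Finset.sum_erase_add S _ haS
    rw [Finset.sum_range_succ]
    omega

lemma aux_sum_card_strict (k : ℕ) (S : Finset ℕ) (hS : S.card = k)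
    (h : ∃ a ∈ S, k ≤ a) : ∑ i ∈ range k, i + 1 ≤ ∑ a ∈ S, a := by
  obtain ⟨b, hbS, hbk⟩ := h
  cases k with
  | zero => simp at hS; simp [hS] at hbS
  | succ k =>
    have hne : S.Nonempty := ⟨b, hbS⟩
    set a := S.max' hne with ha
    have haS : a ∈ S := S.max'_mem hne
    have hk : k + 1 ≤ a := le_trans hbk (S.le_max' b hbS)
    have herase : (S.erase a).card = k := by rw [Finset.card_erase_of_mem haS, hS]; omega
    have h1 := aux_sum_card k (S.erase a) herase
    have h2 : ∑ c ∈ S.erase a, c + a = ∑ c ∈ S, c := Finset.sum_erase_add S _ haS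
    rw [Finset.sum_range_succ]
    omega

/-- Injective function version, lower bound. -/
lemma aux_inj_sum {k p : ℕ} (g : Fin k → Fin p) (hg : Function.Injective g) :
    ∑ i : Fin k, (i : ℕ) ≤ ∑ i : Fin k, (g i : ℕ) := by
  classical
  have hgid : Function.Injective (fun i => (g i : ℕ)) :=
    fun i j h => hg (Fin.val_injective h)
  have himg : (Finset.univ.image (fun i => (g i : ℕ))).card = k := by
    rw [Finset.card_image_of_injective _ hgid, Finset.card_univ, Fintype.card_fin]
  have := aux_sum_card k _ himg
  rw [Finset.sum_image (fun i _ j _ h => hgid h)] at this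
  rw [Fin.sum_univ_eq_sum_range (fun i => i)]
  exact this

lemma aux_inj_sum_strict {k p : ℕ} (g : Fin k → Fin p) (hg : Function.Injective g)
    (h : ∃ i, k ≤ (g i : ℕ)) :
    ∑ i : Fin k, (i : ℕ) + 1 ≤ ∑ i : Fin k, (g i : ℕ) := by
  classical
  have hgid : Function.Injective (fun i => (g i : ℕ)) :=
    fun i j hh => hg (Fin.val_injective hh)
  have himg : (Finset.univ.image (fun i => (g i : ℕ))).card = k := by
    rw [Finset.card_image_of_injective _ hgid, Finset.card_univ, Fintype.card_fin]
  obtain ⟨i0, hi0⟩ := h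
  have := aux_sum_card_strict k _ himg ⟨(g i0 : ℕ), Finset.mem_image_of_mem _ (Finset.mem_univ i0), hi0⟩
  rw [Finset.sum_image (fun i _ j _ hh => hgid hh)] at this
  rw [Fin.sum_univ_eq_sum_range (fun i => i)]
  exact this

/-- A monotone permutation of `Fin k` is the identity. -/
lemma aux_mono_perm {k : ℕ} (π : Equiv.Perm (Fin k)) (h : Monotone π) : π = 1 := by
  have hs : StrictMono π := h.strictMono_of_injective π.injective
  have hle : ∀ (τ : Equiv.Perm (Fin k)), StrictMono τ → ∀ i : Fin k, (i : ℕ) ≤ (τ i : ℕ) := by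
    intro τ hτ
    have key : ∀ v : ℕ, ∀ i : Fin k, (i : ℕ) = v → v ≤ (τ i : ℕ) := by
      intro v
      induction v with
      | zero => intro i _; exact Nat.zero_le _
      | succ w ihw =>
        intro i hi
        have hw : w < k := by omega
        have hji : (⟨w, hw⟩ : Fin k) < i := by simp [Fin.lt_def]; omega
        have h1 : τ ⟨w, hw⟩ < τ i := hτ hji
        have h2 : w ≤ (τ ⟨w, hw⟩ : ℕ) := ihw ⟨w, hw⟩ rfl
        have h3 : (τ ⟨w, hw⟩ : ℕ) < (τ i : ℕ) := h1
        omega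
    intro i; exact key (i : ℕ) i rfl
  have hinv : StrictMono (π⁻¹ : Equiv.Perm (Fin k)) := by
    intro a b hab
    rcases lt_trichotomy (π⁻¹ a) (π⁻¹ b) with h' | h' | h'
    · exact h'
    · exfalso; rw [← (show π (π⁻¹ a) = a from π.apply_symm_apply a), ← (show π (π⁻¹ b) = b from π.apply_symm_apply b), h'] at hab
      exact lt_irrefl _ hab
    · exfalso
      have := hs h'
      rw [(show π (π⁻¹ a) = a from π.apply_symm_apply a), (show π (π⁻¹ b) = b from π.apply_symm_apply b)] at this
      exact absurd hab (not_lt_of_gt this)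
  ext i
  have h1 := hle π hs i
  have h2 := hle π⁻¹ hinv (π i)
  rw [(show π⁻¹ (π i) = i from π.symm_apply_apply i)] at h2
  simp only [Equiv.Perm.coe_one, id_eq]
  exact Nat.le_antisymm h2 h1

lemma aux_monovary_perm {k : ℕ} (f : Fin k → ℤ) (hf : StrictMono f) (π : Equiv.Perm (Fin k))
    (h : Monovary f ((fun i : Fin k => ((i : ℤ) + 1)) ∘ π)) : π = 1 := by
  apply aux_mono_perm
  intro i j hij
  rcases eq_or_lt_of_le hij with rfl | hlt
  · exact le_refl _
  · by_contra hcon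
    push_neg at hcon
    have hππ : ((fun i : Fin k => ((i : ℤ) + 1)) ∘ π) j < ((fun i : Fin k => ((i : ℤ) + 1)) ∘ π) i := by
      simp only [Function.comp_apply]
      have : (π j : ℕ) < (π i : ℕ) := hcon
      omega
    have hfle : f j ≤ f i := h hππ
    exact absurd (hf hlt) (not_lt.mpr hfle)

lemma aux_rearrange {k : ℕ} (u : Fin k → ℤ) (hu : StrictMono u) (π : Equiv.Perm (Fin k)) :
    (∑ i, u i * ((π i : ℤ) + 1) ≤ ∑ i, u i * ((i : ℤ) + 1)) ∧
    (π ≠ 1 → ∑ i, u i * ((π i : ℤ) + 1) < ∑ i, u i * ((i : ℤ) + 1)) := by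
  have hmono : Monovary u (fun i : Fin k => ((i : ℤ) + 1)) := by
    intro i j hij
    have hij0 : ((i : ℤ) + 1) < ((j : ℤ) + 1) := hij
    have hij' : i < j := by
      have : (i : ℕ) < (j : ℕ) := by omega
      exact this
    exact (hu hij').le
  constructor
  · exact hmono.sum_mul_comp_perm_le_sum_mul
  · intro hπ
    rw [hmono.sum_mul_comp_perm_lt_sum_mul_iff]
    intro hmv
    exact hπ (aux_monovary_perm u hu π hmv)

lemma aux_telescope (e : ℕ → ℝ) (he : ∀ t, e t = 1 ∨ e t = -1) (d : ℕ → ℝ)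
    (hd0 : d 0 = e 0) (hds : ∀ t, d (t + 1) = e (t + 1) * e t) :
    ∀ kv : ℕ, ∏ t ∈ Finset.range (kv + 1), d t = e kv := by
  intro kv
  induction kv with
  | zero => simpa using hd0
  | succ w ihw =>
    rw [Finset.prod_range_succ, ihw, hds]
    have : e w * e w = 1 := by rcases he w with h | h <;> rw [h] <;> norm_num
    calc e w * (e (w + 1) * e w) = e (w + 1) * (e w * e w) := by ring
    _ = e (w + 1) := by rw [this, mul_one]

lemma aux_exponent {m n p k : ℕ} (hk : k ≤ p) (hpm : p ≤ m) (hpn : p ≤ n) (M : ℤ)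
    (hM : M = (p * p * (m + n) : ℕ) + 1)
    (r : Fin k → Fin m) (c : Fin k → Fin n) (hr : StrictMono r) (hc : StrictMono c)
    (σ : Equiv.Perm (Fin k)) (g : Fin k → Fin p) (hg : Function.Injective g)
    (hne : ¬(σ = 1 ∧ ∀ i, (g i : ℕ) = (i : ℕ))) :
    (∑ i, ((((r (σ i) : ℕ) : ℤ) + 1) * (((g i : ℕ) : ℤ) + 1) - M * ((g i : ℕ) : ℤ)))
      + (∑ i, (((c i : ℕ) : ℤ) + 1) * (((g i : ℕ) : ℤ) + 1))
    < (∑ i, ((((r i : ℕ) : ℤ) + 1) * (((i : ℕ) : ℤ) + 1) - M * ((i : ℕ) : ℤ)))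
      + (∑ i, (((c i : ℕ) : ℤ) + 1) * (((i : ℕ) : ℤ) + 1)) := by
  classical
  have hM0 : (0 : ℤ) < M := by rw [hM]; positivity
  -- split the subtraction sums
  rw [Finset.sum_sub_distrib, Finset.sum_sub_distrib, ← Finset.mul_sum, ← Finset.mul_sum]
  set Sr : ℤ := ∑ i, ((((r (σ i) : ℕ) : ℤ) + 1) * (((g i : ℕ) : ℤ) + 1)) with hSr
  set Sc : ℤ := ∑ i, ((((c i : ℕ) : ℤ) + 1) * (((g i : ℕ) : ℤ) + 1)) with hSc
  set Sr' : ℤ := ∑ i, ((((r i : ℕ) : ℤ) + 1) * (((i : ℕ) : ℤ) + 1)) with hSr'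
  set Sc' : ℤ := ∑ i, ((((c i : ℕ) : ℤ) + 1) * (((i : ℕ) : ℤ) + 1)) with hSc'
  set Sg : ℤ := ∑ i : Fin k, ((g i : ℕ) : ℤ) with hSg
  set S0 : ℤ := ∑ i : Fin k, ((i : ℕ) : ℤ) with hS0
  by_cases hsmall : ∀ i : Fin k, (g i : ℕ) < k
  · -- case B : g is a permutation of {0,...,k-1}
    set π0 : Fin k → Fin k := fun i => ⟨(g i : ℕ), hsmall i⟩ with hπ0
    have hπinj : Function.Injective π0 := by
      intro i j h
      have hv0 : (π0 i).val = (π0 j).val := congrArg Fin.val h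
      have hv : (g i : ℕ) = (g j : ℕ) := hv0
      exact hg (Fin.ext hv)
    let π : Equiv.Perm (Fin k) := Equiv.ofBijective π0 (Finite.injective_iff_bijective.mp hπinj)
    have hπval : ∀ i, ((π i : ℕ) : ℤ) = ((g i : ℕ) : ℤ) := fun i => rfl
    -- Sg = S0
    have hSgS0 : Sg = S0 := by
      rw [hSg, hS0]
      have := Equiv.sum_comp π (fun j : Fin k => ((j : ℕ) : ℤ))
      rw [← this]
      exact Finset.sum_congr rfl fun i _ => (hπval i).symm
    -- rearrangement for Sc
    have hcu : StrictMono (fun i : Fin k => (((c i : ℕ) : ℤ) + 1)) := by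
      intro i j hij
      show ((c i : ℕ) : ℤ) + 1 < ((c j : ℕ) : ℤ) + 1
      have : (c i : ℕ) < (c j : ℕ) := hc hij
      omega
    have hru : StrictMono (fun i : Fin k => (((r i : ℕ) : ℤ) + 1)) := by
      intro i j hij
      show ((r i : ℕ) : ℤ) + 1 < ((r j : ℕ) : ℤ) + 1
      have : (r i : ℕ) < (r j : ℕ) := hr hij
      omega
    have hScle := aux_rearrange (fun i : Fin k => (((c i : ℕ) : ℤ) + 1)) hcu π
    have hSceq : Sc = ∑ i, (fun i : Fin k => (((c i : ℕ) : ℤ) + 1)) i * ((π i : ℤ) + 1) := by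
      rw [hSc]
      exact Finset.sum_congr rfl fun i _ => by rw [hπval i]
    -- rearrangement for Sr, with permutation π * σ⁻¹
    have hSreq : Sr = ∑ i, (fun i : Fin k => (((r i : ℕ) : ℤ) + 1)) i * ((((π * σ⁻¹) i) : ℤ) + 1) := by
      rw [hSr]
      have := Equiv.sum_comp σ
        (fun j : Fin k => ((((r j : ℕ) : ℤ) + 1) * ((((π * σ⁻¹) j) : ℤ) + 1)))
      rw [← this]
      apply Finset.sum_congr rfl
      intro i _
      have h1 : (π * σ⁻¹) (σ i) = π i := by
        simp [Equiv.Perm.mul_apply]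
      rw [h1, hπval i]
    have hSrle := aux_rearrange (fun i : Fin k => (((r i : ℕ) : ℤ) + 1)) hru (π * σ⁻¹)
    -- one of the two is strict
    have hkey : π ≠ 1 ∨ (π * σ⁻¹) ≠ 1 := by
      by_contra hcon
      push_neg at hcon
      obtain ⟨hπ1, hπσ1⟩ := hcon
      apply hne
      have hσ1 : σ = 1 := by
        have := hπσ1
        rw [hπ1] at this
        have h2 : σ⁻¹ = 1 := by rwa [one_mul] at this
        simpa using congrArg Inv.inv h2
      refine ⟨hσ1, fun i => ?_⟩
      have : π i = i := by rw [hπ1]; rfl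
      have := congrArg Fin.val this
      exact this
    have hfin : Sr + Sc < Sr' + Sc' := by
      rcases hkey with hπne | hπσne
      · have h1 : Sc < Sc' := by rw [hSceq, hSc']; exact (hScle.2 hπne)
        have h2 : Sr ≤ Sr' := by rw [hSreq, hSr']; exact hSrle.1
        omega
      · have h1 : Sr < Sr' := by rw [hSreq, hSr']; exact (hSrle.2 hπσne)
        have h2 : Sc ≤ Sc' := by rw [hSceq, hSc']; exact hScle.1
        omega
    have hMeq : M * Sg = M * S0 := by rw [hSgS0]
    linarith [hfin, hMeq]
  · -- case A : some g i is at least k, the M-part dominates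
    push_neg at hsmall
    obtain ⟨i0, hi0⟩ := hsmall
    have hSgge : S0 + 1 ≤ Sg := by
      have := aux_inj_sum_strict g hg ⟨i0, hi0⟩
      have hcast : ((∑ i : Fin k, (i : ℕ) : ℕ) : ℤ) + 1 ≤ ((∑ i : Fin k, (g i : ℕ) : ℕ) : ℤ) := by
        exact_mod_cast this
      rw [hS0, hSg]
      push_cast at hcast ⊢
      convert hcast using 2
    have hS0nonneg : 0 ≤ S0 := by
      rw [hS0]; positivity
    -- crude bounds
    have hbound : Sr + Sc ≤ M - 1 := by
      have hb1 : Sr ≤ (k : ℤ) * ((m : ℤ) * (p : ℤ)) := by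
        rw [hSr]
        calc ∑ i, ((((r (σ i) : ℕ) : ℤ) + 1) * (((g i : ℕ) : ℤ) + 1))
            ≤ ∑ _i : Fin k, (m : ℤ) * (p : ℤ) := by
              apply Finset.sum_le_sum
              intro i _
              have h1 : ((r (σ i) : ℕ) : ℤ) + 1 ≤ (m : ℤ) := by
                have := (r (σ i)).isLt; omega
              have h2 : (((g i : ℕ) : ℤ) + 1) ≤ (p : ℤ) := by
                have := (g i).isLt; omega
              have h1' : (0:ℤ) ≤ ((r (σ i) : ℕ) : ℤ) + 1 := by positivity
              have h2' : (0:ℤ) ≤ ((g i : ℕ) : ℤ) + 1 := by positivity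
              exact mul_le_mul h1 h2 h2' (by positivity)
          _ = (k : ℤ) * ((m : ℤ) * (p : ℤ)) := by
              rw [Finset.sum_const, Finset.card_univ, Fintype.card_fin]; push_cast; ring
      have hb2 : Sc ≤ (k : ℤ) * ((n : ℤ) * (p : ℤ)) := by
        rw [hSc]
        calc ∑ i, ((((c i : ℕ) : ℤ) + 1) * (((g i : ℕ) : ℤ) + 1))
            ≤ ∑ _i : Fin k, (n : ℤ) * (p : ℤ) := by
              apply Finset.sum_le_sum
              intro i _
              have h1 : ((c i : ℕ) : ℤ) + 1 ≤ (n : ℤ) := by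
                have := (c i).isLt; omega
              have h2 : (((g i : ℕ) : ℤ) + 1) ≤ (p : ℤ) := by
                have := (g i).isLt; omega
              exact mul_le_mul h1 h2 (by positivity) (by positivity)
          _ = (k : ℤ) * ((n : ℤ) * (p : ℤ)) := by
              rw [Finset.sum_const, Finset.card_univ, Fintype.card_fin]; push_cast; ring
      have hkp : (k : ℤ) ≤ (p : ℤ) := by exact_mod_cast hk
      have hMval : M = (p : ℤ) * (p : ℤ) * ((m : ℤ) + (n : ℤ)) + 1 := by
        rw [hM]; push_cast; ring
      have hstep : (k : ℤ) * ((m : ℤ) * (p : ℤ)) + (k : ℤ) * ((n : ℤ) * (p : ℤ))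
          ≤ (p : ℤ) * ((m : ℤ) * (p : ℤ)) + (p : ℤ) * ((n : ℤ) * (p : ℤ)) := by
        apply add_le_add
        · exact mul_le_mul_of_nonneg_right hkp (by positivity)
        · exact mul_le_mul_of_nonneg_right hkp (by positivity)
      have hMexp : M - 1 = (p : ℤ) * ((m : ℤ) * (p : ℤ)) + (p : ℤ) * ((n : ℤ) * (p : ℤ)) := by
        rw [hMval]; ring
      linarith [hb1, hb2, hstep]
    have hpos' : 0 ≤ Sr' + Sc' := by
      rw [hSr', hSc']
      have h1 : (0:ℤ) ≤ ∑ i, ((((r i : ℕ) : ℤ) + 1) * (((i : ℕ) : ℤ) + 1)) :=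
        Finset.sum_nonneg fun i _ => by positivity
      have h2 : (0:ℤ) ≤ ∑ i, ((((c i : ℕ) : ℤ) + 1) * (((i : ℕ) : ℤ) + 1)) :=
        Finset.sum_nonneg fun i _ => by positivity
      omega
    have hmul : M * (S0 + 1) ≤ M * Sg := by
      apply mul_le_mul_of_nonneg_left hSgge (le_of_lt hM0)
    nlinarith [hmul, hbound, hpos', hM0]

lemma aux_prod_zpow {ι : Type*} (x : ℝ) (hx : x ≠ 0) (s : Finset ι) (f : ι → ℤ) :
    ∏ i ∈ s, x ^ (f i) = x ^ (∑ i ∈ s, f i) := by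
  classical
  induction s using Finset.induction with
  | empty => simp
  | insert _ _ h ih => rw [Finset.prod_insert h, Finset.sum_insert h, zpow_add₀ hx, ih]

/-- `A` is strictly sign regular of order `p` with sign pattern `ε` (`SSR_p(ε)`):
for every `k ∈ {1, …, p}` (here `k = kk.val + 1` for `kk : Fin p`), every `k × k` minor of `A`
(the determinant of the submatrix on any `k` rows and `k` columns taken in increasing order)
has sign `ε k`, i.e. `ε k` times the minor is strictly positive. -/
def IsSSRp (p : ℕ) {m n : ℕ} (A : Matrix (Fin m) (Fin n) ℝ) (ε : Fin p → ℝ) : Prop :=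
  ∀ (kk : Fin p) (r : Fin (kk.val + 1) → Fin m) (c : Fin (kk.val + 1) → Fin n),
    StrictMono r → StrictMono c → 0 < ε kk * (A.submatrix r c).det

theorem stmt_17 (m n : ℕ) (hm : 1 ≤ m) (hn : 1 ≤ n)
    (ε : Fin (min m n) → ℝ) (hε : ∀ i, ε i = 1 ∨ ε i = -1) :
    ∃ A : Matrix (Fin m) (Fin n) ℝ, IsSSRp (min m n) A ε := by
  classical
  suffices H : ∀ (p : ℕ), p ≤ m → p ≤ n → ∀ ε : Fin p → ℝ, (∀ i, ε i = 1 ∨ ε i = -1) →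
      ∃ A : Matrix (Fin m) (Fin n) ℝ, IsSSRp p A ε by
    exact H (min m n) (min_le_left m n) (min_le_right m n) ε hε
  clear hε ε
  intro p hpm hpn ε hε
  -- sign sequences
  set e : ℕ → ℝ := fun t => if h : t < p then ε ⟨t, h⟩ else 1 with he_def
  have hepm : ∀ t, e t = 1 ∨ e t = -1 := by
    intro t
    by_cases h : t < p
    · simp only [he_def, dif_pos h]; exact hε _
    · exact Or.inl (by simp [he_def, h])
  set d : ℕ → ℝ := fun t => if t = 0 then e 0 else e t * e (t - 1) with hd_def
  have hd0 : d 0 = e 0 := by simp [hd_def]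
  have hds : ∀ t, d (t + 1) = e (t + 1) * e t := by intro t; simp [hd_def]
  have hdpm : ∀ t, d t = 1 ∨ d t = -1 := by
    intro t
    rcases Nat.eq_zero_or_pos t with rfl | ht
    · rw [hd0]; exact hepm 0
    · have hne : t ≠ 0 := Nat.pos_iff_ne_zero.mp ht
      simp only [hd_def, if_neg hne]
      rcases hepm t with h1 | h1 <;> rcases hepm (t - 1) with h2 | h2 <;>
        rw [h1, h2] <;> norm_num
  have htel : ∀ kv : ℕ, ∏ t ∈ Finset.range (kv + 1), d t = e kv :=
    aux_telescope e hepm d hd0 hds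
  -- the big constants
  set M : ℤ := ((p * p * (m + n) : ℕ) : ℤ) + 1 with hM_def
  set N : ℕ := (p + 1).factorial * ((p + 1) ^ (p + 1) + 1) with hN_def
  set x : ℝ := (N : ℝ) + 1 with hx_def
  have hx1 : 1 ≤ x := by
    rw [hx_def]
    have : (0 : ℝ) ≤ (N : ℝ) := Nat.cast_nonneg N
    linarith
  have hx0 : 0 < x := lt_of_lt_of_le one_pos hx1
  have hxne : x ≠ 0 := ne_of_gt hx0
  -- the matrix pieces
  set RR : Fin m → Fin p → ℝ :=
    fun i ℓ => d (ℓ : ℕ) * x ^ ((((i : ℕ) : ℤ) + 1) * (((ℓ : ℕ) : ℤ) + 1) - M * ((ℓ : ℕ) : ℤ))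
    with hRR_def
  set CC : Fin n → Fin p → ℝ :=
    fun j ℓ => x ^ ((((j : ℕ) : ℤ) + 1) * (((ℓ : ℕ) : ℤ) + 1)) with hCC_def
  have key : ∀ (k : ℕ), 1 ≤ k → k ≤ p → ∀ (s : ℝ), s = e (k - 1) →
      ∀ (r : Fin k → Fin m) (c : Fin k → Fin n), StrictMono r → StrictMono c →
      0 < s * Matrix.det (Matrix.submatrix
        ((fun i j => ∑ ℓ : Fin p, RR i ℓ * CC j ℓ) : Matrix (Fin m) (Fin n) ℝ) r c) := by
    intro k hk1 hkp s hs r c hr hc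
    have hspm : s = 1 ∨ s = -1 := by rw [hs]; exact hepm (k - 1)
    set ι : Fin k → Fin p := fun i => Fin.castLE hkp i with hι_def
    have hιval : ∀ i : Fin k, (ι i : ℕ) = (i : ℕ) := fun i => rfl
    -- term and exponent
    set Ex : Equiv.Perm (Fin k) → (Fin k → Fin p) → ℤ := fun σ g =>
      (∑ i, ((((r (σ i) : ℕ) : ℤ) + 1) * (((g i : ℕ) : ℤ) + 1) - M * ((g i : ℕ) : ℤ)))
        + (∑ i, (((c i : ℕ) : ℤ) + 1) * (((g i : ℕ) : ℤ) + 1)) with hEx_def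
    set T : Equiv.Perm (Fin k) → (Fin k → Fin p) → ℝ := fun σ g =>
      ((Equiv.Perm.sign σ : ℤ) : ℝ) * ∏ i, (RR (r (σ i)) (g i) * CC (c i) (g i)) with hT_def
    -- determinant expansion
    have hdet : Matrix.det (Matrix.submatrix
        ((fun i j => ∑ ℓ : Fin p, RR i ℓ * CC j ℓ) : Matrix (Fin m) (Fin n) ℝ) r c)
        = ∑ σ : Equiv.Perm (Fin k), ∑ g : Fin k → Fin p, T σ g := by
      rw [Matrix.det_apply']
      refine Finset.sum_congr rfl fun σ _ => ?_
      have h1 : ∏ i, (Matrix.submatrix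
          ((fun i j => ∑ ℓ : Fin p, RR i ℓ * CC j ℓ) : Matrix (Fin m) (Fin n) ℝ) r c) (σ i) i
          = ∑ g : Fin k → Fin p, ∏ i, (RR (r (σ i)) (g i) * CC (c i) (g i)) := by
        have h2 : ∀ i : Fin k, (Matrix.submatrix
            ((fun i j => ∑ ℓ : Fin p, RR i ℓ * CC j ℓ) : Matrix (Fin m) (Fin n) ℝ) r c) (σ i) i
            = ∑ ℓ ∈ Finset.univ, RR (r (σ i)) ℓ * CC (c i) ℓ := fun i => rfl
        rw [Finset.prod_congr rfl fun i _ => h2 i]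
        rw [Finset.prod_univ_sum]
        rw [Fintype.piFinset_univ]
      rw [h1, Finset.mul_sum]
    rw [hdet]
    rw [Finset.sum_comm]
    -- cancellation of non-injective g
    have hcancel : ∀ g : Fin k → Fin p, ¬Function.Injective g →
        ∑ σ : Equiv.Perm (Fin k), T σ g = 0 := by
      intro g hginj
      rw [Function.not_injective_iff] at hginj
      obtain ⟨a, b, hgab, hab⟩ := hginj
      set τ := Equiv.swap a b with hτ_def
      have hgτ : ∀ i, g (τ i) = g i := by
        intro i
        rcases eq_or_ne i a with rfl | hia
        · rw [hτ_def, Equiv.swap_apply_left]; exact hgab.symm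
        rcases eq_or_ne i b with rfl | hib
        · rw [hτ_def, Equiv.swap_apply_right]; exact hgab
        · rw [hτ_def, Equiv.swap_apply_of_ne_of_ne hia hib]
      have hkey : ∀ σ : Equiv.Perm (Fin k), T (σ * τ) g = -T σ g := by
        intro σ
        have hsign : ((Equiv.Perm.sign (σ * τ) : ℤ) : ℝ) = -((Equiv.Perm.sign σ : ℤ) : ℝ) := by
          rw [Equiv.Perm.sign_mul, hτ_def, Equiv.Perm.sign_swap hab]
          push_cast
          ring
        have h3 : ∏ i, RR (r ((σ * τ) i)) (g i) = ∏ i, RR (r (σ i)) (g i) := by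
          calc ∏ i, RR (r ((σ * τ) i)) (g i)
              = ∏ i, RR (r (σ (τ i))) (g (τ i)) := by
                refine Finset.prod_congr rfl fun i _ => ?_
                rw [hgτ i]
                rfl
            _ = ∏ i, RR (r (σ i)) (g i) := Equiv.prod_comp τ (fun i => RR (r (σ i)) (g i))
        have hprod : ∏ i, (RR (r ((σ * τ) i)) (g i) * CC (c i) (g i))
            = ∏ i, (RR (r (σ i)) (g i) * CC (c i) (g i)) := by
          calc ∏ i, (RR (r ((σ * τ) i)) (g i) * CC (c i) (g i))
              = (∏ i, RR (r ((σ * τ) i)) (g i)) * ∏ i, CC (c i) (g i) := Finset.prod_mul_distrib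
            _ = (∏ i, RR (r (σ i)) (g i)) * ∏ i, CC (c i) (g i) := by rw [h3]
            _ = ∏ i, (RR (r (σ i)) (g i) * CC (c i) (g i)) := Finset.prod_mul_distrib.symm
        rw [hT_def]
        simp only
        rw [hsign, hprod]
        ring
      have hbij : ∑ σ : Equiv.Perm (Fin k), T σ g
          = ∑ σ : Equiv.Perm (Fin k), T (σ * τ) g := by
        have := Equiv.sum_comp (Equiv.mulRight τ) (fun σ : Equiv.Perm (Fin k) => T σ g)
        exact this.symm
      have h2 : ∑ σ : Equiv.Perm (Fin k), T σ g = -∑ σ : Equiv.Perm (Fin k), T σ g := by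
        nth_rewrite 1 [hbij]
        rw [← Finset.sum_neg_distrib]
        exact Finset.sum_congr rfl fun σ _ => hkey σ
      linarith [h2]
    -- product value of a term
    have hprod_val : ∀ (σ : Equiv.Perm (Fin k)) (g : Fin k → Fin p),
        ∏ i, (RR (r (σ i)) (g i) * CC (c i) (g i))
          = (∏ i, d ((g i : ℕ))) * x ^ (Ex σ g) := by
      intro σ g
      calc ∏ i, (RR (r (σ i)) (g i) * CC (c i) (g i))
          = ∏ i, (d ((g i : ℕ)) *
              x ^ (((((r (σ i) : ℕ) : ℤ) + 1) * (((g i : ℕ) : ℤ) + 1) - M * ((g i : ℕ) : ℤ))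
                + ((((c i : ℕ) : ℤ) + 1) * (((g i : ℕ) : ℤ) + 1)))) := by
            refine Finset.prod_congr rfl fun i _ => ?_
            rw [hRR_def, hCC_def]
            simp only
            rw [mul_assoc, ← zpow_add₀ hxne]
        _ = (∏ i, d ((g i : ℕ))) * ∏ i, x ^
              (((((r (σ i) : ℕ) : ℤ) + 1) * (((g i : ℕ) : ℤ) + 1) - M * ((g i : ℕ) : ℤ))
                + ((((c i : ℕ) : ℤ) + 1) * (((g i : ℕ) : ℤ) + 1))) := Finset.prod_mul_distrib
        _ = (∏ i, d ((g i : ℕ))) * x ^ (Ex σ g) := by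
            rw [aux_prod_zpow x hxne, hEx_def]
            simp only
            rw [Finset.sum_add_distrib]
    -- absolute value of a term
    have habsT : ∀ (σ : Equiv.Perm (Fin k)) (g : Fin k → Fin p), |T σ g| = x ^ (Ex σ g) := by
      intro σ g
      rw [hT_def]
      simp only
      rw [hprod_val σ g, abs_mul, abs_mul]
      have h1 : |((Equiv.Perm.sign σ : ℤ) : ℝ)| = 1 := by
        rcases Int.units_eq_one_or (Equiv.Perm.sign σ) with h | h <;> rw [h] <;> norm_num
      have h2 : |∏ i, d ((g i : ℕ))| = 1 := by
        rw [Finset.abs_prod]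
        rw [Finset.prod_congr rfl fun i _ =>
          (by rcases hdpm ((g i : ℕ)) with h | h <;> rw [h] <;> norm_num : |d ((g i : ℕ))| = 1)]
        simp
      rw [h1, h2, abs_of_pos (zpow_pos hx0 _), one_mul, one_mul]
    -- value of the top term
    have hT1 : T 1 ι = s * x ^ (Ex 1 ι) := by
      rw [hT_def]
      simp only
      rw [hprod_val 1 ι]
      have h1 : (∏ i : Fin k, d ((ι i : ℕ))) = s := by
        have h2 : (∏ i : Fin k, d ((ι i : ℕ))) = ∏ i : Fin k, d (i : ℕ) :=
          Finset.prod_congr rfl fun i _ => by rw [hιval i]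
        have h3 : k = (k - 1) + 1 := by omega
        rw [h2, Fin.prod_univ_eq_prod_range (fun t => d t) k, h3, htel (k - 1), hs]
      rw [h1]
      simp
    -- the strict exponent bound
    have hstep : ∀ (σ : Equiv.Perm (Fin k)) (g : Fin k → Fin p), Function.Injective g →
        ¬(σ = 1 ∧ g = ι) → Ex σ g ≤ Ex 1 ι - 1 := by
      intro σ g hginj hne
      have hne2 : ¬(σ = 1 ∧ ∀ i : Fin k, (g i : ℕ) = (i : ℕ)) := by
        rintro ⟨hσ, hg⟩
        exact hne ⟨hσ, funext fun i => Fin.ext (by rw [hg i, hιval i])⟩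
      have hmain := aux_exponent hkp hpm hpn M (by rw [hM_def]) r c hr hc σ g hginj hne2
      have hEx1 : Ex 1 ι
          = (∑ i, ((((r i : ℕ) : ℤ) + 1) * (((i : ℕ) : ℤ) + 1) - M * ((i : ℕ) : ℤ)))
            + (∑ i, (((c i : ℕ) : ℤ) + 1) * (((i : ℕ) : ℤ) + 1)) := by
        rw [hEx_def]
        rfl
      rw [hEx1, hEx_def]
      simp only
      omega
    -- final assembly
    set Inj := Finset.univ.filter (fun g : Fin k → Fin p => Function.Injective g) with hInj_def
    have hιinj : Function.Injective ι := fun i j hij => Fin.castLE_injective hkp hij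
    have hιmem : ι ∈ Inj := Finset.mem_filter.mpr ⟨Finset.mem_univ _, hιinj⟩
    have h1 : ∑ g : Fin k → Fin p, ∑ σ : Equiv.Perm (Fin k), T σ g
        = ∑ g ∈ Inj, ∑ σ : Equiv.Perm (Fin k), T σ g := by
      rw [← Finset.sum_filter_add_sum_filter_not Finset.univ
        (fun g : Fin k → Fin p => Function.Injective g)
        (fun g => ∑ σ : Equiv.Perm (Fin k), T σ g)]
      have hz : ∑ g ∈ Finset.univ.filter (fun g : Fin k → Fin p => ¬Function.Injective g),
          ∑ σ : Equiv.Perm (Fin k), T σ g = 0 :=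
        Finset.sum_eq_zero fun g hg => hcancel g (Finset.mem_filter.mp hg).2
      rw [hz, add_zero, hInj_def]
    have h2 : ∑ g ∈ Inj, ∑ σ : Equiv.Perm (Fin k), T σ g
        = (∑ σ : Equiv.Perm (Fin k), T σ ι)
          + ∑ g ∈ Inj.erase ι, ∑ σ : Equiv.Perm (Fin k), T σ g :=
      (Finset.add_sum_erase Inj _ hιmem).symm
    have h3 : ∑ σ : Equiv.Perm (Fin k), T σ ι
        = T 1 ι + ∑ σ ∈ Finset.univ.erase 1, T σ ι :=
      (Finset.add_sum_erase Finset.univ (fun σ => T σ ι) (Finset.mem_univ 1)).symm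
    set B : ℝ := x ^ (Ex 1 ι - 1) with hB_def
    have hBpos : 0 < B := zpow_pos hx0 _
    have hxB : B * x = x ^ (Ex 1 ι) := by
      rw [hB_def, ← zpow_add_one₀ hxne, sub_add_cancel]
    have hTB : ∀ (σ : Equiv.Perm (Fin k)) (g : Fin k → Fin p), Function.Injective g →
        ¬(σ = 1 ∧ g = ι) → |T σ g| ≤ B := by
      intro σ g hg hne
      rw [habsT σ g, hB_def]
      exact zpow_le_zpow_right₀ hx1 (hstep σ g hg hne)
    have hcard1 : ((Finset.univ.erase (1 : Equiv.Perm (Fin k))).card : ℝ)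
        ≤ ((Nat.factorial k : ℕ) : ℝ) := by
      have hnat : (Finset.univ.erase (1 : Equiv.Perm (Fin k))).card ≤ Nat.factorial k := by
        calc (Finset.univ.erase (1 : Equiv.Perm (Fin k))).card
            ≤ (Finset.univ : Finset (Equiv.Perm (Fin k))).card := Finset.card_erase_le
          _ = Nat.factorial k := by
              rw [Finset.card_univ, Fintype.card_perm, Fintype.card_fin]
      exact_mod_cast hnat
    have hcard2 : ((Inj.erase ι).card : ℝ) ≤ ((p ^ k : ℕ) : ℝ) := by
      have hnat : (Inj.erase ι).card ≤ p ^ k := by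
        calc (Inj.erase ι).card ≤ Inj.card := Finset.card_erase_le
          _ ≤ (Finset.univ : Finset (Fin k → Fin p)).card := Finset.card_filter_le _ _
          _ = p ^ k := by
              rw [Finset.card_univ, Fintype.card_fun, Fintype.card_fin, Fintype.card_fin]
      exact_mod_cast hnat
    have hrest1 : |∑ σ ∈ Finset.univ.erase 1, T σ ι| ≤ ((Nat.factorial k : ℕ) : ℝ) * B := by
      calc |∑ σ ∈ Finset.univ.erase 1, T σ ι|
          ≤ ∑ σ ∈ Finset.univ.erase 1, |T σ ι| := Finset.abs_sum_le_sum_abs _ _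
        _ ≤ ∑ _σ ∈ Finset.univ.erase (1 : Equiv.Perm (Fin k)), B :=
            Finset.sum_le_sum fun σ hσ => hTB σ ι hιinj
              (by rintro ⟨hσ1, _⟩; exact (Finset.mem_erase.mp hσ).1 hσ1)
        _ = ((Finset.univ.erase (1 : Equiv.Perm (Fin k))).card : ℝ) * B := by
            rw [Finset.sum_const, nsmul_eq_mul]
        _ ≤ ((Nat.factorial k : ℕ) : ℝ) * B := mul_le_mul_of_nonneg_right hcard1 hBpos.le
    have hinner : ∀ g ∈ Inj.erase ι, |∑ σ : Equiv.Perm (Fin k), T σ g|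
        ≤ ((Nat.factorial k : ℕ) : ℝ) * B := by
      intro g hg
      obtain ⟨hgne, hgInj⟩ := Finset.mem_erase.mp hg
      have hginj : Function.Injective g := (Finset.mem_filter.mp hgInj).2
      calc |∑ σ : Equiv.Perm (Fin k), T σ g|
          ≤ ∑ σ : Equiv.Perm (Fin k), |T σ g| := Finset.abs_sum_le_sum_abs _ _
        _ ≤ ∑ _σ : Equiv.Perm (Fin k), B :=
            Finset.sum_le_sum fun σ _ => hTB σ g hginj (by rintro ⟨_, hg2⟩; exact hgne hg2)
        _ = ((Nat.factorial k : ℕ) : ℝ) * B := by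
            rw [Finset.sum_const, nsmul_eq_mul, Finset.card_univ, Fintype.card_perm,
              Fintype.card_fin]
    have hrest2 : |∑ g ∈ Inj.erase ι, ∑ σ : Equiv.Perm (Fin k), T σ g|
        ≤ ((p ^ k * Nat.factorial k : ℕ) : ℝ) * B := by
      calc |∑ g ∈ Inj.erase ι, ∑ σ : Equiv.Perm (Fin k), T σ g|
          ≤ ∑ g ∈ Inj.erase ι, |∑ σ : Equiv.Perm (Fin k), T σ g| :=
            Finset.abs_sum_le_sum_abs _ _
        _ ≤ ∑ _g ∈ Inj.erase ι, ((Nat.factorial k : ℕ) : ℝ) * B := Finset.sum_le_sum hinner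
        _ = ((Inj.erase ι).card : ℝ) * (((Nat.factorial k : ℕ) : ℝ) * B) := by
            rw [Finset.sum_const, nsmul_eq_mul]
        _ ≤ ((p ^ k : ℕ) : ℝ) * (((Nat.factorial k : ℕ) : ℝ) * B) :=
            mul_le_mul_of_nonneg_right hcard2 (by positivity)
        _ = ((p ^ k * Nat.factorial k : ℕ) : ℝ) * B := by push_cast; ring
    have hcount : ((Nat.factorial k : ℕ) : ℝ) + ((p ^ k * Nat.factorial k : ℕ) : ℝ)
        ≤ (N : ℝ) := by
      have hnat : Nat.factorial k + p ^ k * Nat.factorial k ≤ N := by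
        rw [hN_def]
        have hf : Nat.factorial k ≤ Nat.factorial (p + 1) := Nat.factorial_le (by omega)
        have hpow : p ^ k ≤ (p + 1) ^ (p + 1) :=
          le_trans (Nat.pow_le_pow_left (by omega) k) (Nat.pow_le_pow_right (by omega) (by omega))
        calc Nat.factorial k + p ^ k * Nat.factorial k
            = Nat.factorial k * (1 + p ^ k) := by ring
          _ ≤ Nat.factorial (p + 1) * (1 + (p + 1) ^ (p + 1)) := Nat.mul_le_mul hf (by omega)
          _ = Nat.factorial (p + 1) * ((p + 1) ^ (p + 1) + 1) := by ring
      exact_mod_cast hnat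
    have hsabs : |s| = 1 := by rcases hspm with h | h <;> rw [h] <;> norm_num
    have hT1' : s * T 1 ι = x ^ (Ex 1 ι) := by
      rw [hT1]
      rcases hspm with h | h <;> rw [h] <;> ring
    rw [h1, h2, h3]
    set P1 : ℝ := ∑ σ ∈ Finset.univ.erase 1, T σ ι with hP1_def
    set P2 : ℝ := ∑ g ∈ Inj.erase ι, ∑ σ : Equiv.Perm (Fin k), T σ g with hP2_def
    have hgoal : s * ((T 1 ι + P1) + P2) = x ^ (Ex 1 ι) + s * (P1 + P2) := by
      rw [← hT1']; ring
    rw [hgoal]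
    have habs2 : |s * (P1 + P2)| ≤ (x - 1) * B := by
      rw [abs_mul, hsabs, one_mul]
      calc |P1 + P2| ≤ |P1| + |P2| := abs_add_le _ _
        _ ≤ ((Nat.factorial k : ℕ) : ℝ) * B + ((p ^ k * Nat.factorial k : ℕ) : ℝ) * B :=
            add_le_add hrest1 hrest2
        _ = (((Nat.factorial k : ℕ) : ℝ) + ((p ^ k * Nat.factorial k : ℕ) : ℝ)) * B := by ring
        _ ≤ (N : ℝ) * B := mul_le_mul_of_nonneg_right hcount hBpos.le
        _ = (x - 1) * B := by rw [hx_def]; ring_nf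
    have hlow : -((x - 1) * B) ≤ s * (P1 + P2) := (abs_le.mp habs2).1
    have hkey2 : B * x - (x - 1) * B = B := by ring
    linarith [hlow, hkey2, hBpos, hxB]
  refine ⟨(fun i j => ∑ ℓ : Fin p, RR i ℓ * CC j ℓ : Matrix (Fin m) (Fin n) ℝ), ?_⟩
  intro kk r c hr hc
  have hεkk : ε kk = e ((kk.val + 1) - 1) := by
    simp only [he_def, Nat.add_sub_cancel, dif_pos kk.isLt]
  exact key (kk.val + 1) (by omega) kk.isLt (ε kk) hεkk r c hr hc
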